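/- Let θ ∈ (0,π) and s_Σ, α, ŝ, r̂, C', d₀, d₁ ∈ ℝ, and define ψ(t) = s_Σ·t² + (α·cos θ/(3 sin²θ) − (ŝ − α·r̂)/6)·t³ − (α/3)·sin θ·((cot²θ + 1)(t² + C'))^{3/2} + d₀ + d₁·t. On any interval on which t² + C' > 0, ψ is four times differentiable and ψ''''(t) = −3α·(cot²θ + 1)·C'²·(t² + C')^{−5/2}. In particular, if α < 0 and C' ≠ 0, then ψ''''(t) > 0 there, so ψ'' is strictly convex on such an interval. -/

import Mathlib

/-- On any interval on which `t² + C' > 0`, `ψ` is four times differentiable with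
`ψ''''(t) = −3α(cot²θ + 1)C'²(t² + C')^(−5/2)`; if moreover `α < 0` and `C' ≠ 0`
then `ψ'''' > 0` there and `ψ''` is strictly convex on the interval. -/
theorem psi_fourth_derivative (θ sS alpha shat rhat C d0 d1 : ℝ)
    (hθ : θ ∈ Set.Ioo 0 Real.pi)
    (ψ : ℝ → ℝ)
    (hψ : ψ = fun t => sS * t ^ 2
      + (alpha * Real.cos θ / (3 * Real.sin θ ^ 2) - (shat - alpha * rhat) / 6) * t ^ 3
      - (alpha / 3) * Real.sin θ * ((Real.cot θ ^ 2 + 1) * (t ^ 2 + C)) ^ ((3 : ℝ) / 2)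
      + d0 + d1 * t)
    (I : Set ℝ) (hIconv : Convex ℝ I) (hpos : ∀ t ∈ I, 0 < t ^ 2 + C) :
    (∀ t ∈ I,
      (∀ j < 4, HasDerivAt (deriv^[j] ψ) (deriv^[j + 1] ψ t) t) ∧
      deriv^[4] ψ t
        = -3 * alpha * (Real.cot θ ^ 2 + 1) * C ^ 2 * (t ^ 2 + C) ^ (-(5 : ℝ) / 2) ∧
      (alpha < 0 → C ≠ 0 → 0 < deriv^[4] ψ t)) ∧
    (alpha < 0 → C ≠ 0 → StrictConvexOn ℝ I (deriv^[2] ψ)) := by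
  have hs : 0 < Real.sin θ := Real.sin_pos_of_pos_of_lt_pi hθ.1 hθ.2
  set k : ℝ := Real.cot θ ^ 2 + 1 with hk_def
  have hk_eq : k = (Real.sin θ)⁻¹ ^ 2 := by
    have h := Real.sin_sq_add_cos_sq θ
    rw [hk_def, Real.cot_eq_cos_div_sin]
    field_simp
    linarith [h]
  have hk_pos : 0 < k := by rw [hk_eq]; positivity
  -- sin θ * k^(3/2) = k
  have hks : Real.sin θ * k ^ ((3 : ℝ) / 2) = k := by
    have h1 : k ^ ((3 : ℝ) / 2) = (Real.sin θ)⁻¹ ^ (3 : ℕ) := by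
      rw [hk_eq, ← Real.rpow_natCast (Real.sin θ)⁻¹ 2,
        ← Real.rpow_natCast (Real.sin θ)⁻¹ 3,
        ← Real.rpow_mul (by positivity)]
      norm_num
    rw [h1, hk_eq]
    field_simp
  set A : ℝ := alpha * Real.cos θ / (3 * Real.sin θ ^ 2) - (shat - alpha * rhat) / 6 with hA
  set B : ℝ := alpha / 3 * Real.sin θ * k ^ ((3 : ℝ) / 2) with hB
  have hB' : B = alpha / 3 * k := by rw [hB, mul_assoc, hks]
  set U : Set ℝ := {t : ℝ | 0 < t ^ 2 + C} with hU_def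
  have hU : IsOpen U := isOpen_lt continuous_const (by continuity)
  have hIU : I ⊆ U := fun t ht => hpos t ht
  -- the rewritten functions
  set q0 : ℝ → ℝ := fun t => sS * t ^ 2 + A * t ^ 3
      - B * (t ^ 2 + C) ^ ((3 : ℝ) / 2) + d0 + d1 * t with hq0
  set q1 : ℝ → ℝ := fun t => sS * (2 * t) + A * (3 * t ^ 2)
      - B * (3 * t * (t ^ 2 + C) ^ ((1 : ℝ) / 2)) + d1 with hq1
  set q2 : ℝ → ℝ := fun t => 2 * sS + A * (6 * t)
      - B * (3 * (t ^ 2 + C) ^ ((1 : ℝ) / 2) + 3 * t ^ 2 * (t ^ 2 + C) ^ (-(1 : ℝ) / 2)) with hq2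
  set q3 : ℝ → ℝ := fun t => A * 6
      - B * (9 * t * (t ^ 2 + C) ^ (-(1 : ℝ) / 2) - 3 * t ^ 3 * (t ^ 2 + C) ^ (-(3 : ℝ) / 2))
      with hq3
  set q4 : ℝ → ℝ := fun t => -3 * alpha * k * C ^ 2 * (t ^ 2 + C) ^ (-(5 : ℝ) / 2) with hq4
  -- ψ agrees with q0 on U
  have h0 : Set.EqOn ψ q0 U := by
    intro t ht
    have hv : (0 : ℝ) ≤ t ^ 2 + C := le_of_lt ht
    rw [hψ]
    simp only [hq0]
    rw [Real.mul_rpow hk_pos.le hv]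
    ring
  -- derivative facts
  have hv2 : ∀ t : ℝ, HasDerivAt (fun t : ℝ => t ^ 2 + C) (2 * t) t := by
    intro t
    simpa using (hasDerivAt_pow 2 t).add_const C
  have hrp : ∀ (p : ℝ) (t : ℝ), t ∈ U →
      HasDerivAt (fun t : ℝ => (t ^ 2 + C) ^ p) (2 * t * p * (t ^ 2 + C) ^ (p - 1)) t := by
    intro p t ht
    exact (hv2 t).rpow_const (Or.inl (ne_of_gt ht))
  have hd0 : ∀ t ∈ U, HasDerivAt q0 (q1 t) t := by
    intro t ht
    have h := (((hasDerivAt_pow 2 t).const_mul sS).add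
        ((hasDerivAt_pow 3 t).const_mul A)).sub
        ((hrp ((3 : ℝ) / 2) t ht).const_mul B)
    have h' := ((h.add_const d0).add ((hasDerivAt_id t).const_mul d1))
    refine h'.congr_deriv ?_
    have e : (3 : ℝ) / 2 - 1 = 1 / 2 := by norm_num
    simp only [hq1]
    push_cast [e]
    ring
  have hd1 : ∀ t ∈ U, HasDerivAt q1 (q2 t) t := by
    intro t ht
    have hprod := ((hasDerivAt_id' t).const_mul 3).mul (hrp ((1 : ℝ) / 2) t ht)
    have h := ((((hasDerivAt_id t).const_mul 2).const_mul sS).add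
        (((hasDerivAt_pow 2 t).const_mul 3).const_mul A)).sub (hprod.const_mul B)
    have h' := h.add_const d1
    refine h'.congr_deriv ?_
    have e : (1 : ℝ) / 2 - 1 = -(1 : ℝ) / 2 := by norm_num
    simp only [hq2]
    push_cast [e]
    ring
  have hd2 : ∀ t ∈ U, HasDerivAt q2 (q3 t) t := by
    intro t ht
    have h1 := (hrp ((1 : ℝ) / 2) t ht).const_mul 3
    have h2 := ((hasDerivAt_pow 2 t).const_mul 3).mul (hrp (-(1 : ℝ) / 2) t ht)
    have h := ((hasDerivAt_const t (2 * sS)).add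
        (((hasDerivAt_id t).const_mul 6).const_mul A)).sub ((h1.add h2).const_mul B)
    refine h.congr_deriv ?_
    have e1 : (1 : ℝ) / 2 - 1 = -(1 : ℝ) / 2 := by norm_num
    have e2 : -(1 : ℝ) / 2 - 1 = -(3 : ℝ) / 2 := by norm_num
    simp only [hq3]
    push_cast [e1, e2]
    ring
  have hd3 : ∀ t ∈ U, HasDerivAt q3 (q4 t) t := by
    intro t ht
    have hv : 0 < t ^ 2 + C := ht
    have h1 := ((hasDerivAt_id' t).const_mul 9).mul (hrp (-(1 : ℝ) / 2) t ht)
    have h2 := ((hasDerivAt_pow 3 t).const_mul 3).mul (hrp (-(3 : ℝ) / 2) t ht)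
    have h := (hasDerivAt_const t (A * 6)).sub ((h1.sub h2).const_mul B)
    refine h.congr_deriv ?_
    have e1 : -(1 : ℝ) / 2 - 1 = -(3 : ℝ) / 2 := by norm_num
    have e2 : -(3 : ℝ) / 2 - 1 = -(5 : ℝ) / 2 := by norm_num
    have w1 : (t ^ 2 + C) ^ (-(1 : ℝ) / 2)
        = (t ^ 2 + C) ^ 2 * (t ^ 2 + C) ^ (-(5 : ℝ) / 2) := by
      rw [← Real.rpow_natCast (t ^ 2 + C) 2, ← Real.rpow_add hv]; norm_num
    have w2 : (t ^ 2 + C) ^ (-(3 : ℝ) / 2)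
        = (t ^ 2 + C) * (t ^ 2 + C) ^ (-(5 : ℝ) / 2) := by
      nth_rewrite 2 [← Real.rpow_one (t ^ 2 + C)]
      rw [← Real.rpow_add hv]; norm_num
    simp only [hq4, hB']
    rw [e1, e2, w2, w1]
    push_cast
    ring
  -- EqOn of iterated derivatives
  have step : ∀ (f g g' : ℝ → ℝ), Set.EqOn f g U → (∀ t ∈ U, HasDerivAt g (g' t) t) →
      Set.EqOn (deriv f) g' U := by
    intro f g g' hfg hg t ht
    have hev : f =ᶠ[nhds t] g := Filter.eventuallyEq_of_mem (hU.mem_nhds ht) hfg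
    rw [hev.deriv_eq, (hg t ht).deriv]
  have h1 : Set.EqOn (deriv ψ) q1 U := step ψ q0 q1 h0 hd0
  have h2 : Set.EqOn (deriv (deriv ψ)) q2 U := step (deriv ψ) q1 q2 h1 hd1
  have h3 : Set.EqOn (deriv (deriv (deriv ψ))) q3 U := step _ q2 q3 h2 hd2
  have h4 : Set.EqOn (deriv (deriv (deriv (deriv ψ)))) q4 U := step _ q3 q4 h3 hd3
  have hit2 : deriv^[2] ψ = deriv (deriv ψ) := rfl
  have hit3 : deriv^[3] ψ = deriv (deriv (deriv ψ)) := rfl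
  have hit4 : deriv^[4] ψ = deriv (deriv (deriv (deriv ψ))) := rfl
  -- positivity of q4
  have hq4pos : ∀ t ∈ U, alpha < 0 → C ≠ 0 → 0 < q4 t := by
    intro t ht ha hC
    have hv : 0 < t ^ 2 + C := ht
    have hw : 0 < (t ^ 2 + C) ^ (-(5 : ℝ) / 2) := Real.rpow_pos_of_pos hv _
    have hC2 : 0 < C ^ 2 := by positivity
    simp only [hq4]
    have h3a : 0 < -3 * alpha := by linarith
    positivity
  constructor
  · intro t ht
    have htU : t ∈ U := hIU ht
    refine ⟨?_, ?_, ?_⟩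
    · intro j hj
      interval_cases j
      · have := (hd0 t htU).congr_of_eventuallyEq
          (Filter.eventuallyEq_of_mem (hU.mem_nhds htU) h0)
        simpa [Function.iterate_one, (h1 htU).symm] using this
      · have := (hd1 t htU).congr_of_eventuallyEq
          (Filter.eventuallyEq_of_mem (hU.mem_nhds htU) h1)
        simpa [hit2, (h2 htU).symm] using this
      · have := (hd2 t htU).congr_of_eventuallyEq
          (Filter.eventuallyEq_of_mem (hU.mem_nhds htU) h2)
        simpa [hit2, hit3, (h3 htU).symm] using this
      · have := (hd3 t htU).congr_of_eventuallyEq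
          (Filter.eventuallyEq_of_mem (hU.mem_nhds htU) h3)
        simpa [hit3, hit4, (h4 htU).symm] using this
    · rw [hit4, h4 htU]
    · intro ha hC
      rw [hit4, h4 htU]
      exact hq4pos t htU ha hC
  · intro ha hC
    apply strictConvexOn_of_deriv2_pos hIconv
    · intro t ht
      have hcont : ContinuousAt (deriv^[2] ψ) t := by
        have := (hd2 t (hIU ht)).congr_of_eventuallyEq
          (Filter.eventuallyEq_of_mem (hU.mem_nhds (hIU ht)) h2)
        exact this.continuousAt
      exact hcont.continuousWithinAt
    · intro t ht
      have htI : t ∈ I := interior_subset ht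
      have htU : t ∈ U := hIU htI
      have he : deriv^[2] (deriv^[2] ψ) t = deriv^[4] ψ t := by
        rw [← Function.iterate_add_apply]
      rw [he, hit4, h4 htU]
      exact hq4pos t htU ha hC
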